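/- Let A ∈ ℝ^{n×n} be Schur stable and W ∈ ℝ^{n×n}. Define the covariance iteration P[r+1] := A P[r] Aᵀ + W from an arbitrary initial matrix P[0] ∈ ℝ^{n×n}. Then P[r] converges as r → ∞ to Σ := Σ_{k=0}^{∞} A^k W (Aᵀ)^k, and Σ is the unique solution P of the equation A P Aᵀ − P + W = 0. -/

import Mathlib

open Matrix Filter Polynomial
open scoped ENNReal NNReal

/-- A real square matrix is Schur stable if every eigenvalue of it, regarded as a complex
matrix, has modulus strictly less than `1`. -/
def SchurStable {ι : Type*} [Fintype ι] [DecidableEq ι] (A : Matrix ι ι ℝ) : Prop :=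
  ∀ μ : ℂ, ((A.map Complex.ofReal).charpoly).IsRoot μ → ‖μ‖ < 1


attribute [local instance] Matrix.linftyOpNormedAddCommGroup Matrix.linftyOpNormedRing
  Matrix.linftyOpNormedSpace Matrix.linftyOpNormedAlgebra

noncomputable local instance {m : ℕ} : CompleteSpace (Matrix (Fin m) (Fin m) ℂ) :=
  FiniteDimensional.complete ℂ _

lemma mem_spectrum_isRoot {m : ℕ} (M : Matrix (Fin m) (Fin m) ℂ) (z : ℂ) (hz : z ∈ spectrum ℂ M) :
    M.charpoly.IsRoot z := by
  rw [spectrum.mem_iff] at hz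
  rw [IsRoot, Matrix.charpoly, eval_det, matPolyEquiv_charmatrix]
  simp only [eval_sub, eval_X, eval_C]
  by_contra h
  apply hz
  rw [Matrix.isUnit_iff_isUnit_det]
  · exact isUnit_iff_ne_zero.mpr h


lemma geom_bound_complex {m : ℕ} (M : Matrix (Fin m) (Fin m) ℂ)
    (h : ∀ z ∈ spectrum ℂ M, ‖z‖₊ < 1) :
    ∃ r : ℝ≥0, r < 1 ∧ ∀ᶠ k : ℕ in atTop, ‖M ^ k‖ ≤ (r : ℝ) ^ k := by
  rcases Nat.eq_zero_or_pos m with hm | hm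
  · refine ⟨1/2, by rw [← NNReal.coe_lt_coe]; norm_num, Eventually.of_forall fun k => ?_⟩
    have : Subsingleton (Matrix (Fin m) (Fin m) ℂ) := by
      subst hm; infer_instance
    rw [Subsingleton.elim (M ^ k) 0, norm_zero]
    positivity
  · have : Nonempty (Fin m) := ⟨⟨0, hm⟩⟩
    have hρ : spectralRadius ℂ M < ((1 : ℝ≥0) : ℝ≥0∞) :=
      spectrum.spectralRadius_lt_of_forall_lt M h
    obtain ⟨r, hr1, hr2⟩ := ENNReal.lt_iff_exists_nnreal_btwn.mp hρ
    have hrlt : r < 1 := by exact_mod_cast hr2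
    have hgelf := spectrum.pow_nnnorm_pow_one_div_tendsto_nhds_spectralRadius M
    have hev : ∀ᶠ k : ℕ in atTop, (‖M ^ k‖₊ : ℝ≥0∞) ^ (1 / (k:ℝ)) < r :=
      hgelf.eventually_lt_const hr1
    refine ⟨r, hrlt, ?_⟩
    filter_upwards [hev, eventually_ge_atTop 1] with k hk hk1
    have hk0 : (k : ℝ) ≠ 0 := by positivity
    have h2 : ((‖M ^ k‖₊ : ℝ≥0∞) ^ (1 / (k:ℝ))) ^ (k:ℝ) ≤ (r : ℝ≥0∞) ^ (k:ℝ) :=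
      ENNReal.rpow_le_rpow hk.le (by positivity)
    rw [← ENNReal.rpow_mul, one_div_mul_cancel hk0, ENNReal.rpow_one] at h2
    have h3 : (‖M ^ k‖₊ : ℝ≥0∞) ≤ ((r ^ k : ℝ≥0) : ℝ≥0∞) := by
      rwa [ENNReal.coe_pow, ← ENNReal.rpow_natCast (r : ℝ≥0∞) k]
    have h4 : ‖M ^ k‖₊ ≤ r ^ k := by exact_mod_cast h3
    exact_mod_cast h4

lemma norm_map_ofReal {m : ℕ} (B : Matrix (Fin m) (Fin m) ℝ) :
    ‖B.map Complex.ofReal‖ = ‖B‖ := by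
  rw [← coe_nnnorm, ← coe_nnnorm]
  congr 1
  rw [Matrix.linfty_opNNNorm_def, Matrix.linfty_opNNNorm_def]
  congr 1
  ext i
  congr 1
  ext j
  simp [Matrix.map_apply]

lemma map_ofReal_pow {m : ℕ} (B : Matrix (Fin m) (Fin m) ℝ) (k : ℕ) :
    (B.map Complex.ofReal) ^ k = (B ^ k).map Complex.ofReal := by
  exact (map_pow (Complex.ofRealHom.mapMatrix) B k).symm

lemma geom_bound_real {m : ℕ} (A : Matrix (Fin m) (Fin m) ℝ) (hA : SchurStable A) :
    ∃ r : ℝ≥0, r < 1 ∧ ∀ᶠ k : ℕ in atTop, ‖A ^ k‖ ≤ (r : ℝ) ^ k := by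
  obtain ⟨r, hr, hev⟩ := geom_bound_complex (A.map Complex.ofReal) (fun z hz => by
    have := hA z (mem_spectrum_isRoot _ z hz)
    rw [← NNReal.coe_lt_coe, coe_nnnorm, NNReal.coe_one]
    exact this)
  refine ⟨r, hr, ?_⟩
  filter_upwards [hev] with k hk
  rwa [map_ofReal_pow, norm_map_ofReal] at hk


lemma charpoly_transpose' {m : ℕ} {R : Type*} [CommRing R] (B : Matrix (Fin m) (Fin m) R) :
    Bᵀ.charpoly = B.charpoly := by
  rw [Matrix.charpoly, Matrix.charpoly, ← Matrix.det_transpose (charmatrix Bᵀ)]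
  congr 1
  ext i j
  by_cases h : i = j
  · subst h; simp [charmatrix_apply_eq]
  · simp [Matrix.transpose_apply, charmatrix_apply_ne _ _ _ h,
      charmatrix_apply_ne _ _ _ (Ne.symm h)]

lemma schurStable'_transpose {m : ℕ} (A : Matrix (Fin m) (Fin m) ℝ) (hA : SchurStable A) :
    SchurStable Aᵀ := by
  intro μ hμ
  apply hA μ
  rwa [Matrix.transpose_map, charpoly_transpose'] at hμ

noncomputable local instance {m : ℕ} : CompleteSpace (Matrix (Fin m) (Fin m) ℝ) :=
  FiniteDimensional.complete ℝ _

lemma sandwich_succ {m : ℕ} (A B X : Matrix (Fin m) (Fin m) ℝ) (k : ℕ) :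
    A ^ (k + 1) * X * B ^ (k + 1) = A * (A ^ k * X * B ^ k) * B := by
  rw [pow_succ' A, pow_succ B]
  noncomm_ring

theorem stmt12 {n : ℕ} (A W : Matrix (Fin n) (Fin n) ℝ) (hA : SchurStable A)
    (P : ℕ → Matrix (Fin n) (Fin n) ℝ)
    (hP : ∀ r : ℕ, P (r + 1) = A * P r * Aᵀ + W) :
    ∃ Sigma : Matrix (Fin n) (Fin n) ℝ,
      HasSum (fun k : ℕ => A ^ k * W * (Aᵀ) ^ k) Sigma ∧
      Tendsto P atTop (nhds Sigma) ∧
      (A * Sigma * Aᵀ - Sigma + W = 0) ∧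
      (∀ P' : Matrix (Fin n) (Fin n) ℝ, A * P' * Aᵀ - P' + W = 0 → P' = Sigma) := by
  obtain ⟨r₁, hr₁, hev₁⟩ := geom_bound_real A hA
  obtain ⟨r₂, hr₂, hev₂⟩ := geom_bound_real Aᵀ (schurStable'_transpose A hA)
  set g : ℕ → Matrix (Fin n) (Fin n) ℝ := fun k => A ^ k * W * (Aᵀ) ^ k with hg
  have key : ∀ X : Matrix (Fin n) (Fin n) ℝ, ∀ᶠ k : ℕ in atTop,
      ‖A ^ k * X * (Aᵀ) ^ k‖ ≤ ‖X‖ * ((r₁ : ℝ) * r₂) ^ k := by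
    intro X
    filter_upwards [hev₁, hev₂] with k h1 h2
    calc ‖A ^ k * X * (Aᵀ) ^ k‖ ≤ ‖A ^ k * X‖ * ‖(Aᵀ) ^ k‖ := norm_mul_le _ _
      _ ≤ ‖A ^ k‖ * ‖X‖ * ‖(Aᵀ) ^ k‖ :=
          mul_le_mul_of_nonneg_right (norm_mul_le _ _) (norm_nonneg _)
      _ ≤ (r₁:ℝ) ^ k * ‖X‖ * ((r₂:ℝ) ^ k) := by
          apply mul_le_mul (mul_le_mul_of_nonneg_right h1 (norm_nonneg _)) h2 (norm_nonneg _)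
          positivity
      _ = ‖X‖ * ((r₁ : ℝ) * r₂) ^ k := by ring
  have hrr : (r₁ : ℝ) * r₂ < 1 := by
    calc (r₁ : ℝ) * r₂ ≤ 1 * r₂ := by
          apply mul_le_mul_of_nonneg_right _ r₂.coe_nonneg
          exact_mod_cast hr₁.le
      _ < 1 := by rw [one_mul]; exact_mod_cast hr₂
  have hrr0 : (0:ℝ) ≤ (r₁ : ℝ) * r₂ := by positivity
  have tend0 : ∀ X : Matrix (Fin n) (Fin n) ℝ,
      Tendsto (fun k => A ^ k * X * (Aᵀ) ^ k) atTop (nhds 0) := by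
    intro X
    apply squeeze_zero_norm' (key X)
    have := tendsto_pow_atTop_nhds_zero_of_lt_one hrr0 hrr
    simpa using this.const_mul ‖X‖
  have hsum : Summable g := by
    apply Summable.of_norm_bounded_eventually_nat (g := fun k => ‖W‖ * ((r₁ : ℝ) * r₂) ^ k)
    · exact (summable_geometric_of_lt_one hrr0 hrr).mul_left _
    · exact key W
  obtain ⟨Sigma, hSigma⟩ := hsum
  -- fixed point equation
  have heq : A * Sigma * Aᵀ + W = Sigma := by
    have h1 : HasSum (fun k => A * g k * Aᵀ) (A * Sigma * Aᵀ) :=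
      (hSigma.mul_left A).mul_right Aᵀ
    have h2 : HasSum (fun k => g (k + 1)) (A * Sigma * Aᵀ) := by
      convert h1 using 2 with k
      exact sandwich_succ A Aᵀ W k
    have h3 : HasSum g (A * Sigma * Aᵀ + ∑ k ∈ Finset.range 1, g k) :=
      (hasSum_nat_add_iff 1).mp h2
    have h5 := hSigma.unique h3
    simp only [Finset.range_one, Finset.sum_singleton, hg, pow_zero, one_mul, mul_one] at h5
    exact h5.symm
  refine ⟨Sigma, hSigma, ?_, ?_, ?_⟩
  · -- convergence of P
    have hform : ∀ r : ℕ, P r = A ^ r * P 0 * (Aᵀ) ^ r + ∑ k ∈ Finset.range r, g k := by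
      intro r
      induction r with
      | zero => simp
      | succ r ih =>
        rw [hP r, ih, Finset.sum_range_succ']
        have hg0 : g 0 = W := by simp [hg]
        rw [mul_add, add_mul, Finset.mul_sum, Finset.sum_mul]
        rw [sandwich_succ A Aᵀ (P 0) r]
        have : ∀ k ∈ Finset.range r, A * g k * Aᵀ = g (k + 1) := by
          intro k _
          exact (sandwich_succ A Aᵀ W k).symm
        rw [Finset.sum_congr rfl this, hg0]
        abel
    have h1 := tend0 (P 0)
    have h2 := hSigma.tendsto_sum_nat
    have h3 : Tendsto (fun r => A ^ r * P 0 * (Aᵀ) ^ r + ∑ k ∈ Finset.range r, g k)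
        atTop (nhds Sigma) := by simpa using h1.add h2
    exact h3.congr (fun r => (hform r).symm)
  · rw [show A * Sigma * Aᵀ - Sigma + W = (A * Sigma * Aᵀ + W) - Sigma from by abel,
      heq, sub_self]
  · -- uniqueness
    intro P' hP'
    have h5 : A * P' * Aᵀ + W = P' := by
      have : A * P' * Aᵀ + W = (A * P' * Aᵀ - P' + W) + P' := by abel
      rw [this, hP', zero_add]
    have hfix : A * (P' - Sigma) * Aᵀ = P' - Sigma := by
      rw [mul_sub, sub_mul]
      have e1 : A * P' * Aᵀ = P' - W := by rw [eq_sub_iff_add_eq]; exact h5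
      have e2 : A * Sigma * Aᵀ = Sigma - W := by rw [eq_sub_iff_add_eq]; exact heq
      rw [e1, e2]
      abel
    have hiter : ∀ k : ℕ, A ^ k * (P' - Sigma) * (Aᵀ) ^ k = P' - Sigma := by
      intro k
      induction k with
      | zero => simp
      | succ k ih => rw [sandwich_succ, ih, hfix]
    have hc : Tendsto (fun k : ℕ => A ^ k * (P' - Sigma) * (Aᵀ) ^ k) atTop
        (nhds (P' - Sigma)) := by
      simp only [hiter]
      exact tendsto_const_nhds
    have h0 : P' - Sigma = 0 := tendsto_nhds_unique hc (tend0 (P' - Sigma))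
    rw [sub_eq_zero] at h0
    exact h0
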